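/- Let M, B, K be real symmetric positive semidefinite q×q matrices with MK = 0, let m₀, k₀ > 0, and suppose ω > 0 and ξ ∈ ℂ^q nonzero satisfy Bξ = 0 and ((K + k₀I) − ω²(M + m₀I))ξ = 0. Then there exists μ ∈ ℝ such that (B + i(K − M))ξ = iμξ. -/

import Mathlib

open Matrix Complex

open scoped ComplexOrder

open scoped MatrixOrder

private lemma map_mul_ofReal' {q : ℕ} (A C : Matrix (Fin q) (Fin q) ℝ) :
    (A * C).map (Complex.ofReal) = A.map Complex.ofReal * C.map Complex.ofReal :=
  Matrix.map_mul (f := Complex.ofRealHom)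

private lemma psd_map_complex {q : ℕ} {A : Matrix (Fin q) (Fin q) ℝ} (hA : A.PosSemidef) :
    (A.map Complex.ofReal).PosSemidef := by
  obtain ⟨C, rfl⟩ := CStarAlgebra.nonneg_iff_eq_star_mul_self.mp hA.nonneg
  rw [star_eq_conjTranspose]
  rw [map_mul_ofReal']
  have hCT : (Cᴴ).map Complex.ofReal = (C.map Complex.ofReal)ᴴ := by
    ext i j
    simp [Matrix.conjTranspose_apply, Matrix.map_apply, Complex.conj_ofReal]
  rw [hCT]
  exact posSemidef_conjTranspose_mul_self _

private lemma psd_aux {q : ℕ} {A : Matrix (Fin q) (Fin q) ℝ} (hA : A.PosSemidef)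
    (x : Fin q → ℂ) (c : ℝ) (hc : c ≤ 0)
    (h : (A.map Complex.ofReal) *ᵥ ((A.map Complex.ofReal) *ᵥ x)
        = (c : ℂ) • ((A.map Complex.ofReal) *ᵥ x)) :
    (A.map Complex.ofReal) *ᵥ x = 0 := by
  set A' := A.map Complex.ofReal with hA'def
  have hA'p : A'.PosSemidef := psd_map_complex hA
  set y := A' *ᵥ x with hy
  by_contra hy0
  have htne : star y ⬝ᵥ y ≠ 0 := fun h0 => hy0 (dotProduct_star_self_eq_zero.mp h0)
  have htnn : (0 : ℂ) ≤ star y ⬝ᵥ y := dotProduct_star_self_nonneg y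
  rcases lt_or_eq_of_le hc with hlt | rfl
  · have hyy : star y ⬝ᵥ A' *ᵥ y = (c : ℂ) * (star y ⬝ᵥ y) := by
      rw [h, dotProduct_smul, smul_eq_mul]
    have h1 := hA'p.dotProduct_mulVec_nonneg y
    rw [hyy] at h1
    obtain ⟨hre, him⟩ := Complex.nonneg_iff.mp htnn
    have hrepos : 0 < (star y ⬝ᵥ y).re := by
      rcases lt_or_eq_of_le hre with h' | h'
      · exact h'
      · exact absurd (by apply Complex.ext <;> simp [← h', ← him]) htne
    have : ((c : ℂ) * (star y ⬝ᵥ y)).re < 0 := by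
      rw [Complex.mul_re, Complex.ofReal_re, Complex.ofReal_im, ← him]
      simpa using mul_neg_of_neg_of_pos hlt hrepos
    exact absurd (Complex.nonneg_iff.mp h1).1 (not_le.mpr this)
  · have hAy : A' *ᵥ y = 0 := by rw [h]; simp
    have hstar : star y = star x ᵥ* A' := by
      rw [hy, star_mulVec, hA'p.isHermitian]
    have e : star x ⬝ᵥ (A' *ᵥ y) = star y ⬝ᵥ y := by
      rw [Matrix.dotProduct_mulVec, ← hstar]
    have : star y ⬝ᵥ y = 0 := by rw [← e, hAy, dotProduct_zero]
    exact htne this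

theorem stmt_16 {q : ℕ} (M B K : Matrix (Fin q) (Fin q) ℝ)
    (hM : M.PosSemidef) (hB : B.PosSemidef) (hK : K.PosSemidef)
    (hMK : M * K = 0) (m₀ k₀ : ℝ) (hm₀ : 0 < m₀) (hk₀ : 0 < k₀)
    (ω : ℝ) (hω : 0 < ω) (ξ : Fin q → ℂ) (hξ : ξ ≠ 0)
    (hBξ : (B.map Complex.ofReal) *ᵥ ξ = 0)
    (h : ((K.map Complex.ofReal + (k₀ : ℂ) • (1 : Matrix (Fin q) (Fin q) ℂ)) -
        ((ω : ℂ)^2) • (M.map Complex.ofReal + (m₀ : ℂ) • (1 : Matrix (Fin q) (Fin q) ℂ)))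
        *ᵥ ξ = 0) :
    ∃ μ : ℝ, (B.map Complex.ofReal +
        Complex.I • (K.map Complex.ofReal - M.map Complex.ofReal)) *ᵥ ξ =
        (Complex.I * μ) • ξ := by
  set M' := M.map Complex.ofReal with hM'def
  set K' := K.map Complex.ofReal with hK'def
  set B' := B.map Complex.ofReal with hB'def
  set lam : ℝ := ω ^ 2 * m₀ - k₀ with hlam
  have hω2 : ((ω : ℂ) ^ 2) ≠ 0 := pow_ne_zero _ (Complex.ofReal_ne_zero.mpr hω.ne')
  -- K' ξ = ω² • M' ξ + lam • ξ
  have hKξ : K' *ᵥ ξ = ((ω : ℂ) ^ 2) • (M' *ᵥ ξ) + ((lam : ℝ) : ℂ) • ξ := by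
    have h0 := h
    simp only [sub_mulVec, add_mulVec, Matrix.smul_mulVec, one_mulVec,
      sub_eq_zero] at h0
    funext i
    have hi := congrFun h0 i
    simp only [Pi.add_apply, Pi.smul_apply, smul_eq_mul] at hi ⊢
    rw [hlam]
    push_cast
    linear_combination hi
  -- K M = 0 over ℝ
  have hKM : K * M = 0 := by
    have : (M * K)ᵀ = Kᵀ * Mᵀ := Matrix.transpose_mul M K
    rw [hMK, Matrix.transpose_zero] at this
    have hKt : Kᵀ = K := hK.isHermitian
    have hMt : Mᵀ = M := hM.isHermitian
    rw [hKt, hMt] at this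
    exact this.symm
  have hMKc : M' * K' = 0 := by rw [hM'def, hK'def, ← map_mul_ofReal', hMK]; simp
  have hKMc : K' * M' = 0 := by rw [hM'def, hK'def, ← map_mul_ofReal', hKM]; simp
  have hMKv : M' *ᵥ (K' *ᵥ ξ) = 0 := by rw [Matrix.mulVec_mulVec, hMKc, Matrix.zero_mulVec]
  have hKMv : K' *ᵥ (M' *ᵥ ξ) = 0 := by rw [Matrix.mulVec_mulVec, hKMc, Matrix.zero_mulVec]
  by_cases hlamsgn : 0 ≤ lam
  · -- M' ξ = 0, K' ξ = lam • ξ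
    have hMM : M' *ᵥ (M' *ᵥ ξ) = ((-(lam / ω ^ 2) : ℝ) : ℂ) • (M' *ᵥ ξ) := by
      rw [hKξ, Matrix.mulVec_add, Matrix.mulVec_smul, Matrix.mulVec_smul] at hMKv
      have := eq_neg_of_add_eq_zero_left hMKv
      have h2 : M' *ᵥ (M' *ᵥ ξ) =
          (((ω:ℂ)^2)⁻¹ * (-(((lam : ℝ) : ℂ)))) • (M' *ᵥ ξ) := by
        rw [mul_smul, neg_smul, ← this, inv_smul_smul₀ hω2]
      rw [h2]
      congr 1
      rw [hlam]
      push_cast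
      field_simp
    have hc : -(lam / ω ^ 2) ≤ 0 := by
      have : 0 ≤ lam / ω ^ 2 := div_nonneg hlamsgn (by positivity)
      linarith
    have hMξ0 : M' *ᵥ ξ = 0 := psd_aux hM ξ _ hc hMM
    have hKξ' : K' *ᵥ ξ = ((lam : ℝ) : ℂ) • ξ := by rw [hKξ, hMξ0]; simp
    refine ⟨lam, ?_⟩
    rw [add_mulVec, hBξ, Matrix.smul_mulVec, sub_mulVec, hKξ', hMξ0, sub_zero,
      zero_add, smul_smul]
  · -- K' ξ = 0, M' ξ = (-(lam)/ω²) • ξ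
    push_neg at hlamsgn
    have hKK : K' *ᵥ (K' *ᵥ ξ) = ((lam : ℝ) : ℂ) • (K' *ᵥ ξ) := by
      conv_lhs => rw [hKξ]
      rw [Matrix.mulVec_add, Matrix.mulVec_smul, Matrix.mulVec_smul, hKMv]
      simp
    have hKξ0 : K' *ᵥ ξ = 0 := psd_aux hK ξ lam hlamsgn.le hKK
    have hMξ : M' *ᵥ ξ = ((-(lam / ω ^ 2) : ℝ) : ℂ) • ξ := by
      rw [hKξ0] at hKξ
      have := eq_neg_of_add_eq_zero_left hKξ.symm
      have h2 : M' *ᵥ ξ = (((ω:ℂ)^2)⁻¹ * (-(((lam : ℝ) : ℂ)))) • ξ := by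
        rw [mul_smul, neg_smul, ← this, inv_smul_smul₀ hω2]
      rw [h2]
      congr 1
      rw [hlam]
      push_cast
      field_simp
    refine ⟨lam / ω ^ 2, ?_⟩
    rw [add_mulVec, hBξ, Matrix.smul_mulVec, sub_mulVec, hKξ0, hMξ,
      zero_sub, zero_add, smul_neg, ← neg_smul, smul_smul]
    congr 1
    rw [hlam]
    push_cast
    ring
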